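/- Let a, b, c be pairwise distinct complex numbers, R = ℂ[z], T₁ = R/(z−a), and T₂ = R/(z−b) ⊕ R/(z−c), and let f : T₁ → T₂ be an R-module homomorphism (necessarily f = 0). Call an admissible chain a sequence of pairs (A₀,B₀) ⊆ (A₁,B₁) ⊆ (A₂,B₂) ⊆ (A₃,B₃) with A_k ⊆ T₁ and B_k ⊆ T₂ submodules satisfying f(A_k) ⊆ B_k, (A₀,B₀) = (0,0), (A₃,B₃) = (T₁,T₂); say the k-th step has type 𝗂 if A_k = A_{k−1} and length(B_k/B_{k−1}) = 1, and type 𝗃 if B_k = B_{k−1} and length(A_k/A_{k−1}) = 1. Then there are exactly 2 admissible chains of each of the step types (𝗂,𝗂,𝗃), (𝗂,𝗃,𝗂) and (𝗃,𝗂,𝗂). -/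

import Mathlib

open Order in
/-- The length of a module: the supremum of the lengths of strictly increasing chains of
submodules (the Krull dimension of the submodule lattice). -/
noncomputable def moduleLength (R : Type*) [Ring R] (M : Type*) [AddCommGroup M]
    [Module R M] : WithBot ℕ∞ :=
  krullDim (Submodule R M)

/-- An admissible chain for a `ℂ[z]`-module map `f : T₁ → T₂`: an increasing sequence of
pairs `(A₀,B₀) ⊆ (A₁,B₁) ⊆ (A₂,B₂) ⊆ (A₃,B₃)` of submodules `A_k ⊆ T₁`, `B_k ⊆ T₂` with
`f(A_k) ⊆ B_k`, `(A₀,B₀) = (0,0)` and `(A₃,B₃) = (T₁,T₂)`. -/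
structure AdmChain {M N : Type*} [AddCommGroup M] [Module (Polynomial ℂ) M]
    [AddCommGroup N] [Module (Polynomial ℂ) N] (f : M →ₗ[Polynomial ℂ] N) where
  A : Fin 4 → Submodule (Polynomial ℂ) M
  B : Fin 4 → Submodule (Polynomial ℂ) N
  monoA : Monotone A
  monoB : Monotone B
  compat : ∀ k, (A k).map f ≤ B k
  A_zero : A 0 = ⊥
  B_zero : B 0 = ⊥
  A_last : A 3 = ⊤
  B_last : B 3 = ⊤

/-- The `(k+1)`-st step of an admissible chain has type `𝗂`:
`A_{k+1} = A_k` and `length(B_{k+1}/B_k) = 1`. -/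
def StepI {M N : Type*} [AddCommGroup M] [Module (Polynomial ℂ) M]
    [AddCommGroup N] [Module (Polynomial ℂ) N] {f : M →ₗ[Polynomial ℂ] N}
    (c : AdmChain f) (k : Fin 3) : Prop :=
  c.A k.succ = c.A k.castSucc ∧
  moduleLength (Polynomial ℂ)
    (↥(c.B k.succ) ⧸ (c.B k.castSucc).comap (c.B k.succ).subtype) = 1

/-- The `(k+1)`-st step of an admissible chain has type `𝗃`:
`B_{k+1} = B_k` and `length(A_{k+1}/A_k) = 1`. -/
def StepJ {M N : Type*} [AddCommGroup M] [Module (Polynomial ℂ) M]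
    [AddCommGroup N] [Module (Polynomial ℂ) N] {f : M →ₗ[Polynomial ℂ] N}
    (c : AdmChain f) (k : Fin 3) : Prop :=
  c.B k.succ = c.B k.castSucc ∧
  moduleLength (Polynomial ℂ)
    (↥(c.A k.succ) ⧸ (c.A k.castSucc).comap (c.A k.succ).subtype) = 1



set_option maxHeartbeats 1000000

open Order Polynomial

lemma krullDim_eq_one_iff_isSimpleOrder {α : Type*} [PartialOrder α] [BoundedOrder α] :
    krullDim α = 1 ↔ IsSimpleOrder α := by
  constructor
  · intro h
    have hnt : Nontrivial α := by
      by_contra hs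
      rw [not_nontrivial_iff_subsingleton] at hs
      have := krullDim_nonpos_of_subsingleton (α := α)
      rw [h] at this
      exact absurd this (by decide)
    refine ⟨fun m => ?_⟩
    by_contra hm
    push_neg at hm
    obtain ⟨h1, h2⟩ := hm
    have hlt1 : (⊥ : α) < m := lt_of_le_of_ne bot_le (Ne.symm h1)
    have hlt2 : m < (⊤ : α) := lt_of_le_of_ne le_top h2
    let p : LTSeries α := (((RelSeries.singleton _ (⊥ : α)).snoc m (by exact hlt1)).snoc ⊤
      (by exact hlt2))
    have := Order.LTSeries.length_le_krullDim p
    rw [h] at this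
    have hl : p.length = 2 := rfl
    rw [hl] at this
    exact absurd this (by decide)
  · intro h
    apply le_antisymm
    · refine iSup_le fun p => ?_
      have : p.length ≤ 1 := by
        by_contra hl
        push_neg at hl
        have h01 : p.toFun ⟨0, by omega⟩ < p.toFun ⟨1, by omega⟩ :=
          p.strictMono (by simp [Fin.lt_def])
        have h12 : p.toFun ⟨1, by omega⟩ < p.toFun ⟨2, by omega⟩ :=
          p.strictMono (by simp [Fin.lt_def])
        rcases h.eq_bot_or_eq_top (p.toFun ⟨1, by omega⟩) with h' | h'
        · rw [h'] at h01; exact not_lt_bot h01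
        · rw [h'] at h12; exact not_top_lt h12
      exact_mod_cast Nat.cast_le.mpr this
    · have hp : ((RelSeries.singleton _ (⊥ : α)).snoc ⊤ (by exact bot_lt_top) : LTSeries α).length = 1 := rfl
      have := Order.LTSeries.length_le_krullDim
        ((RelSeries.singleton _ (⊥ : α)).snoc ⊤ (by exact bot_lt_top) : LTSeries α)
      rw [hp] at this
      exact_mod_cast this

section LengthLemmas

variable {R : Type*} [Ring R] {M N : Type*} [AddCommGroup M] [Module R M]
  [AddCommGroup N] [Module R N]

lemma moduleLength_congr (e : M ≃ₗ[R] N) : moduleLength R M = moduleLength R N :=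
  Order.krullDim_eq_of_orderIso (Submodule.orderIsoMapComap e)

lemma moduleLength_eq_one_iff : moduleLength R M = 1 ↔ IsSimpleModule R M :=
  krullDim_eq_one_iff_isSimpleOrder.trans
    ⟨fun h => { toIsSimpleOrder := h }, fun h => h.toIsSimpleOrder⟩

lemma subsingleton_submodule [Subsingleton M] : Subsingleton (Submodule R M) :=
  ⟨fun p q => by ext x; rw [Subsingleton.elim x 0]; simp⟩

lemma moduleLength_ne_one_of_subsingleton [Subsingleton M] : moduleLength R M ≠ 1 := by
  intro h
  have : moduleLength R M ≤ 0 := by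
    have := subsingleton_submodule (R := R) (M := M)
    exact krullDim_nonpos_of_subsingleton
  rw [h] at this
  exact absurd this (by decide)

lemma len_quot_bot (B : Submodule R M) :
    moduleLength R (↥B ⧸ (⊥ : Submodule R M).comap B.subtype) = moduleLength R ↥B :=
  moduleLength_congr (Submodule.quotEquivOfEqBot _ (by
    rw [Submodule.comap_bot, Submodule.ker_subtype]))

lemma len_quot_top (C : Submodule R M) :
    moduleLength R
      (↥(⊤ : Submodule R M) ⧸ C.comap (⊤ : Submodule R M).subtype) =
    moduleLength R (M ⧸ C) :=
  moduleLength_congr (Submodule.Quotient.equiv _ C Submodule.topEquiv (by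
    ext x
    simp only [Submodule.mem_map, Submodule.mem_comap]
    constructor
    · rintro ⟨y, hy, rfl⟩; exact hy
    · intro hx; exact ⟨⟨x, trivial⟩, hx, rfl⟩))

end LengthLemmas

section PolyLemmas

lemma isMaximal_span_X_sub_C (x : ℂ) :
    (Ideal.span {Polynomial.X - Polynomial.C x}).IsMaximal := by
  apply Ideal.Quotient.maximal_of_isField
  exact MulEquiv.isField (Field.toIsField ℂ) (quotientSpanXSubCAlgEquiv x).toMulEquiv

lemma simple_S (x : ℂ) :
    IsSimpleModule (Polynomial ℂ) (Polynomial ℂ ⧸ Ideal.span {Polynomial.X - Polynomial.C x}) :=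
  isSimpleModule_iff_quot_maximal.mpr ⟨_, isMaximal_span_X_sub_C x, ⟨LinearEquiv.refl _ _⟩⟩

lemma smul_mk (x : ℂ) (p q : Polynomial ℂ) :
    p • (Ideal.Quotient.mk (Ideal.span {Polynomial.X - Polynomial.C x}) q)
      = Ideal.Quotient.mk _ (p * q) := rfl

lemma X_sub_C_smul (x : ℂ) (m : Polynomial ℂ ⧸ Ideal.span {Polynomial.X - Polynomial.C x}) :
    (Polynomial.X - Polynomial.C x) • m = 0 := by
  obtain ⟨q, rfl⟩ := Ideal.Quotient.mk_surjective m
  rw [smul_mk, Ideal.Quotient.eq_zero_iff_mem]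
  exact Ideal.mul_mem_right _ _ (Ideal.subset_span rfl)

lemma exists_inv_smul {x y : ℂ} (hxy : x ≠ y) :
    ∃ p : Polynomial ℂ,
      ∀ m : Polynomial ℂ ⧸ Ideal.span {Polynomial.X - Polynomial.C y},
        p • ((Polynomial.X - Polynomial.C x) • m) = m := by
  haveI := isMaximal_span_X_sub_C y
  letI : Field (Polynomial ℂ ⧸ Ideal.span {Polynomial.X - Polynomial.C y}) :=
    Ideal.Quotient.field _
  have hne : (Ideal.Quotient.mk (Ideal.span {Polynomial.X - Polynomial.C y})
      (Polynomial.X - Polynomial.C x)) ≠ 0 := by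
    rw [Ne, Ideal.Quotient.eq_zero_iff_mem, Ideal.mem_span_singleton]
    intro hdvd
    have hd := map_dvd (Polynomial.evalRingHom y) hdvd
    simp only [Polynomial.coe_evalRingHom, Polynomial.eval_sub, Polynomial.eval_X,
      Polynomial.eval_C, sub_self, zero_dvd_iff, sub_eq_zero] at hd
    exact hxy hd.symm
  obtain ⟨p, hp⟩ := Ideal.Quotient.mk_surjective
    (Ideal.Quotient.mk (Ideal.span {Polynomial.X - Polynomial.C y})
      (Polynomial.X - Polynomial.C x))⁻¹
  refine ⟨p, fun m => ?_⟩
  obtain ⟨q, rfl⟩ := Ideal.Quotient.mk_surjective m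
  rw [smul_mk, smul_mk]
  have : (Ideal.Quotient.mk (Ideal.span {Polynomial.X - Polynomial.C y}))
      (p * ((Polynomial.X - Polynomial.C x) * q))
      = (Ideal.Quotient.mk _ p * Ideal.Quotient.mk _ (Polynomial.X - Polynomial.C x))
        * Ideal.Quotient.mk _ q := by
    rw [map_mul, map_mul, mul_assoc]
  rw [this, hp, inv_mul_cancel₀ hne, one_mul]

end PolyLemmas


section ProdLemmas

variable {b c : ℂ}

local notation "Sb" => Polynomial ℂ ⧸ Ideal.span {Polynomial.X - Polynomial.C b}
local notation "Sc" => Polynomial ℂ ⧸ Ideal.span {Polynomial.X - Polynomial.C c}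

lemma ker_snd_eq_prod :
    LinearMap.ker (LinearMap.snd (Polynomial ℂ) Sb Sc)
      = Submodule.prod ⊤ ⊥ := by
  ext ⟨u, v⟩
  simp [LinearMap.mem_ker, Submodule.mem_prod]

lemma ker_fst_eq_prod :
    LinearMap.ker (LinearMap.fst (Polynomial ℂ) Sb Sc)
      = Submodule.prod ⊥ ⊤ := by
  ext ⟨u, v⟩
  simp [LinearMap.mem_ker, Submodule.mem_prod]

lemma split_mem (hbc : b ≠ c)
    (N : Submodule (Polynomial ℂ) (Sb × Sc)) {u : Sb} {v : Sc}
    (h : (u, v) ∈ N) : (u, 0) ∈ N ∧ (0, v) ∈ N := by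
  constructor
  · obtain ⟨p, hp⟩ := exists_inv_smul (Ne.symm hbc)
    have h1 : (Polynomial.X - Polynomial.C c) • ((u, v) : Sb × Sc) ∈ N := N.smul_mem _ h
    have h2 : (Polynomial.X - Polynomial.C c) • ((u, v) : Sb × Sc)
        = ((Polynomial.X - Polynomial.C c) • u, 0) := by
      rw [Prod.smul_mk, X_sub_C_smul]
    rw [h2] at h1
    have h3 := N.smul_mem p h1
    rwa [Prod.smul_mk, hp, smul_zero] at h3
  · obtain ⟨p, hp⟩ := exists_inv_smul hbc
    have h1 : (Polynomial.X - Polynomial.C b) • ((u, v) : Sb × Sc) ∈ N := N.smul_mem _ h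
    have h2 : (Polynomial.X - Polynomial.C b) • ((u, v) : Sb × Sc)
        = (0, (Polynomial.X - Polynomial.C b) • v) := by
      rw [Prod.smul_mk, X_sub_C_smul]
    rw [h2] at h1
    have h3 := N.smul_mem p h1
    rwa [Prod.smul_mk, hp, smul_zero] at h3

lemma submodule_prod_classify (hbc : b ≠ c)
    (N : Submodule (Polynomial ℂ) (Sb × Sc)) :
    N = ⊥ ∨ N = LinearMap.ker (LinearMap.snd (Polynomial ℂ) Sb Sc)
      ∨ N = LinearMap.ker (LinearMap.fst (Polynomial ℂ) Sb Sc) ∨ N = ⊤ := by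
  have hN : N = Submodule.prod (N.map (LinearMap.fst (Polynomial ℂ) Sb Sc))
      (N.map (LinearMap.snd (Polynomial ℂ) Sb Sc)) := by
    apply le_antisymm
    · rintro ⟨u, v⟩ h
      exact ⟨⟨(u, v), h, rfl⟩, ⟨(u, v), h, rfl⟩⟩
    · rintro ⟨u, v⟩ ⟨⟨⟨u', v'⟩, hw, hw1⟩, ⟨⟨u'', v''⟩, hw', hw2⟩⟩
      simp only at hw1 hw2
      subst hw1; subst hw2
      have h1 := (split_mem hbc N hw).1
      have h2 := (split_mem hbc N hw').2
      have := N.add_mem h1 h2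
      simpa using this
  haveI := simple_S b
  haveI := simple_S c
  rcases eq_bot_or_eq_top (N.map (LinearMap.fst (Polynomial ℂ) Sb Sc)) with h1 | h1 <;>
    rcases eq_bot_or_eq_top (N.map (LinearMap.snd (Polynomial ℂ) Sb Sc)) with h2 | h2 <;>
      rw [h1, h2] at hN
  · left; rw [hN]; ext ⟨u, v⟩; simp [Submodule.mem_prod]
  · right; right; left; rw [hN, ker_fst_eq_prod]
  · right; left; rw [hN, ker_snd_eq_prod]
  · right; right; right; rw [hN]; ext ⟨u, v⟩; simp [Submodule.mem_prod]

lemma nontrivial_S (x : ℂ) :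
    Nontrivial (Polynomial ℂ ⧸ Ideal.span {Polynomial.X - Polynomial.C x}) :=
  Ideal.Quotient.nontrivial_iff.mpr (isMaximal_span_X_sub_C x).ne_top

lemma not_ker_snd_le_ker_fst :
    ¬ LinearMap.ker (LinearMap.snd (Polynomial ℂ) Sb Sc)
      ≤ LinearMap.ker (LinearMap.fst (Polynomial ℂ) Sb Sc) := by
  haveI := nontrivial_S b
  obtain ⟨u, hu⟩ := exists_ne (0 : Sb)
  intro h
  have h1 : ((u, 0) : Sb × Sc) ∈ LinearMap.ker (LinearMap.snd (Polynomial ℂ) Sb Sc) := by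
    simp [LinearMap.mem_ker]
  have h2 := h h1
  simp only [LinearMap.mem_ker, LinearMap.fst_apply] at h2
  exact hu h2

lemma not_ker_fst_le_ker_snd :
    ¬ LinearMap.ker (LinearMap.fst (Polynomial ℂ) Sb Sc)
      ≤ LinearMap.ker (LinearMap.snd (Polynomial ℂ) Sb Sc) := by
  haveI := nontrivial_S c
  obtain ⟨v, hv⟩ := exists_ne (0 : Sc)
  intro h
  have h1 : ((0, v) : Sb × Sc) ∈ LinearMap.ker (LinearMap.fst (Polynomial ℂ) Sb Sc) := by
    simp [LinearMap.mem_ker]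
  have h2 := h h1
  simp only [LinearMap.mem_ker, LinearMap.snd_apply] at h2
  exact hv h2

lemma ker_snd_ne_bot :
    LinearMap.ker (LinearMap.snd (Polynomial ℂ) Sb Sc) ≠ ⊥ := by
  haveI := nontrivial_S b
  obtain ⟨u, hu⟩ := exists_ne (0 : Sb)
  intro h
  have h1 : ((u, 0) : Sb × Sc) ∈ LinearMap.ker (LinearMap.snd (Polynomial ℂ) Sb Sc) := by
    simp [LinearMap.mem_ker]
  rw [h, Submodule.mem_bot, Prod.mk_eq_zero] at h1
  exact hu h1.1

lemma ker_fst_ne_bot :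
    LinearMap.ker (LinearMap.fst (Polynomial ℂ) Sb Sc) ≠ ⊥ := by
  haveI := nontrivial_S c
  obtain ⟨v, hv⟩ := exists_ne (0 : Sc)
  intro h
  have h1 : ((0, v) : Sb × Sc) ∈ LinearMap.ker (LinearMap.fst (Polynomial ℂ) Sb Sc) := by
    simp [LinearMap.mem_ker]
  rw [h, Submodule.mem_bot, Prod.mk_eq_zero] at h1
  exact hv h1.2

lemma ker_snd_ne_top :
    LinearMap.ker (LinearMap.snd (Polynomial ℂ) Sb Sc) ≠ ⊤ := by
  intro h
  exact not_ker_fst_le_ker_snd (b := b) (c := c) (h ▸ le_top)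

lemma ker_fst_ne_top :
    LinearMap.ker (LinearMap.fst (Polynomial ℂ) Sb Sc) ≠ ⊤ := by
  intro h
  exact not_ker_snd_le_ker_fst (b := b) (c := c) (h ▸ le_top)

lemma isAtom_ker_snd (hbc : b ≠ c) :
    IsAtom (LinearMap.ker (LinearMap.snd (Polynomial ℂ) Sb Sc)) := by
  refine ⟨ker_snd_ne_bot, fun N hN => ?_⟩
  rcases submodule_prod_classify hbc N with h | h | h | h
  · exact h
  · exact absurd h (ne_of_lt hN)
  · exact absurd (h ▸ hN.le) not_ker_fst_le_ker_snd
  · exact absurd (h ▸ hN) not_top_lt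

lemma isAtom_ker_fst (hbc : b ≠ c) :
    IsAtom (LinearMap.ker (LinearMap.fst (Polynomial ℂ) Sb Sc)) := by
  refine ⟨ker_fst_ne_bot, fun N hN => ?_⟩
  rcases submodule_prod_classify hbc N with h | h | h | h
  · exact h
  · exact absurd (h ▸ hN.le) not_ker_snd_le_ker_fst
  · exact absurd h (ne_of_lt hN)
  · exact absurd (h ▸ hN) not_top_lt

lemma isCoatom_ker_snd (hbc : b ≠ c) :
    IsCoatom (LinearMap.ker (LinearMap.snd (Polynomial ℂ) Sb Sc)) := by
  refine ⟨ker_snd_ne_top, fun N hN => ?_⟩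
  rcases submodule_prod_classify hbc N with h | h | h | h
  · exact absurd (h ▸ hN) not_lt_bot
  · exact absurd h (ne_of_gt hN)
  · exact absurd (h ▸ hN.le) not_ker_snd_le_ker_fst
  · exact h

lemma isCoatom_ker_fst (hbc : b ≠ c) :
    IsCoatom (LinearMap.ker (LinearMap.fst (Polynomial ℂ) Sb Sc)) := by
  refine ⟨ker_fst_ne_top, fun N hN => ?_⟩
  rcases submodule_prod_classify hbc N with h | h | h | h
  · exact absurd (h ▸ hN) not_lt_bot
  · exact absurd (h ▸ hN.le) not_ker_fst_le_ker_snd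
  · exact absurd h (ne_of_gt hN)
  · exact h

lemma ker_snd_ne_ker_fst :
    LinearMap.ker (LinearMap.snd (Polynomial ℂ) Sb Sc)
      ≠ LinearMap.ker (LinearMap.fst (Polynomial ℂ) Sb Sc) :=
  fun h => not_ker_snd_le_ker_fst (le_of_eq h)

end ProdLemmas

section IffLemmas

variable {R : Type*} [Ring R] {M : Type*} [AddCommGroup M] [Module R M]

lemma len_quot_bot_iff (W : Submodule R M) :
    moduleLength R (↥W ⧸ (⊥ : Submodule R M).comap W.subtype) = 1 ↔ IsAtom W := by
  rw [len_quot_bot, moduleLength_eq_one_iff, isSimpleModule_iff_isAtom]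

lemma len_quot_top_iff (W : Submodule R M) :
    moduleLength R (↥(⊤ : Submodule R M) ⧸ W.comap (⊤ : Submodule R M).subtype) = 1
      ↔ IsCoatom W := by
  rw [len_quot_top, moduleLength_eq_one_iff, isSimpleModule_iff_isCoatom]

lemma len_quot_top_iff' {B W : Submodule R M} (hB : B = ⊤) :
    moduleLength R (↥B ⧸ W.comap B.subtype) = 1 ↔ IsCoatom W := by
  subst hB; exact len_quot_top_iff W

end IffLemmas

section MainHelpers

lemma f_eq_zero {a b c : ℂ} (hab : a ≠ b) (hac : a ≠ c)
    (f : (Polynomial ℂ ⧸ Ideal.span {Polynomial.X - Polynomial.C a}) →ₗ[Polynomial ℂ]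
        ((Polynomial ℂ ⧸ Ideal.span {Polynomial.X - Polynomial.C b}) ×
         (Polynomial ℂ ⧸ Ideal.span {Polynomial.X - Polynomial.C c}))) : f = 0 := by
  apply LinearMap.ext
  intro m
  rw [LinearMap.zero_apply]
  have h0 : (Polynomial.X - Polynomial.C a) • m = 0 := X_sub_C_smul a m
  have h1 : (Polynomial.X - Polynomial.C a) • f m = 0 := by
    rw [← map_smul, h0, map_zero]
  have hfst : (Polynomial.X - Polynomial.C a) • (f m).1 = 0 := by
    have := congrArg Prod.fst h1
    simpa using this
  have hsnd : (Polynomial.X - Polynomial.C a) • (f m).2 = 0 := by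
    have := congrArg Prod.snd h1
    simpa using this
  obtain ⟨p, hp⟩ := exists_inv_smul hab
  obtain ⟨q, hq⟩ := exists_inv_smul hac
  have e1 : (f m).1 = 0 := by rw [← hp (f m).1, hfst, smul_zero]
  have e2 : (f m).2 = 0 := by rw [← hq (f m).2, hsnd, smul_zero]
  exact Prod.ext e1 e2

lemma mono4 {α : Type*} [Preorder α] {w x y z : α} (h1 : w ≤ x) (h2 : x ≤ y) (h3 : y ≤ z) :
    Monotone ![w, x, y, z] := by
  intro i j hij
  fin_cases i <;> fin_cases j <;> first
    | exact le_rfl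
    | exact h1
    | exact h2
    | exact h3
    | exact h1.trans h2
    | exact h2.trans h3
    | exact (h1.trans h2).trans h3
    | exact absurd hij (by decide)

def AdmChain.mk' {M N : Type*} [AddCommGroup M] [Module (Polynomial ℂ) M]
    [AddCommGroup N] [Module (Polynomial ℂ) N] (f : M →ₗ[Polynomial ℂ] N) (hf : f = 0)
    (A : Fin 4 → Submodule (Polynomial ℂ) M) (B : Fin 4 → Submodule (Polynomial ℂ) N)
    (monoA : Monotone A) (monoB : Monotone B)
    (hA0 : A 0 = ⊥) (hB0 : B 0 = ⊥) (hA3 : A 3 = ⊤) (hB3 : B 3 = ⊤) : AdmChain f :=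
  ⟨A, B, monoA, monoB, fun k => by
    rw [hf, Submodule.map_zero]; exact bot_le, hA0, hB0, hA3, hB3⟩

theorem AdmChain.ext' {M N : Type*} [AddCommGroup M] [Module (Polynomial ℂ) M]
    [AddCommGroup N] [Module (Polynomial ℂ) N] {f : M →ₗ[Polynomial ℂ] N}
    {c d : AdmChain f} (hA : c.A = d.A) (hB : c.B = d.B) : c = d := by
  cases c; cases d; cases hA; cases hB; rfl

lemma card_subtype_eq_two {α : Type*} {P : α → Prop} {x y : α} (hx : P x) (hy : P y)
    (hxy : x ≠ y) (huniq : ∀ z, P z → z = x ∨ z = y) : Nat.card {z // P z} = 2 := by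
  rw [Nat.card_eq_two_iff]
  refine ⟨⟨x, hx⟩, ⟨y, hy⟩, fun h => hxy (congrArg Subtype.val h), ?_⟩
  rw [Set.eq_univ_iff_forall]
  intro z
  rcases huniq z.1 z.2 with h | h
  · exact Or.inl (Subtype.ext h)
  · exact Or.inr (Subtype.ext h)

end MainHelpers

/-- Lemma 3.5.1(a) of the paper: for pairwise distinct `a`, `b`, `c`,
`T₁ = ℂ[z]/(z−a)`, `T₂ = ℂ[z]/(z−b) ⊕ ℂ[z]/(z−c)` and `f : T₁ → T₂` a `ℂ[z]`-module map
(necessarily `f = 0`), there are exactly `2` admissible chains of each of the step types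
`(𝗂,𝗂,𝗃)`, `(𝗂,𝗃,𝗂)` and `(𝗃,𝗂,𝗂)`. -/

theorem filtration_count_zero_map (a b c : ℂ) (hab : a ≠ b) (hac : a ≠ c) (hbc : b ≠ c)
    (f : (Polynomial ℂ ⧸ Ideal.span {Polynomial.X - Polynomial.C a}) →ₗ[Polynomial ℂ]
        ((Polynomial ℂ ⧸ Ideal.span {Polynomial.X - Polynomial.C b}) ×
         (Polynomial ℂ ⧸ Ideal.span {Polynomial.X - Polynomial.C c}))) :
    Nat.card {ch : AdmChain f // StepI ch 0 ∧ StepI ch 1 ∧ StepJ ch 2} = 2 ∧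
    Nat.card {ch : AdmChain f // StepI ch 0 ∧ StepJ ch 1 ∧ StepI ch 2} = 2 ∧
    Nat.card {ch : AdmChain f // StepJ ch 0 ∧ StepI ch 1 ∧ StepI ch 2} = 2 := by
  have hf0 : f = 0 := f_eq_zero hab hac f
  haveI hsimpA := simple_S a
  obtain ⟨L, K, hLa, hKa, hLc, hKc, hLK, hclass⟩ :
      ∃ L K : Submodule (Polynomial ℂ)
        ((Polynomial ℂ ⧸ Ideal.span {Polynomial.X - Polynomial.C b}) ×
         (Polynomial ℂ ⧸ Ideal.span {Polynomial.X - Polynomial.C c})),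
        IsAtom L ∧ IsAtom K ∧ IsCoatom L ∧ IsCoatom K ∧ L ≠ K ∧
        ∀ N, N = ⊥ ∨ N = L ∨ N = K ∨ N = ⊤ :=
    ⟨_, _, isAtom_ker_snd hbc, isAtom_ker_fst hbc, isCoatom_ker_snd hbc,
      isCoatom_ker_fst hbc, ker_snd_ne_ker_fst, submodule_prod_classify hbc⟩
  have lenT1 : moduleLength (Polynomial ℂ)
      (↥(⊤ : Submodule (Polynomial ℂ)
          (Polynomial ℂ ⧸ Ideal.span {Polynomial.X - Polynomial.C a})) ⧸
        (⊥ : Submodule (Polynomial ℂ)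
          (Polynomial ℂ ⧸ Ideal.span {Polynomial.X - Polynomial.C a})).comap
          (⊤ : Submodule (Polynomial ℂ)
            (Polynomial ℂ ⧸ Ideal.span {Polynomial.X - Polynomial.C a})).subtype) = 1 :=
    (len_quot_top_iff ⊥).mpr isCoatom_bot
  refine ⟨?_, ?_, ?_⟩
  · -- pattern (i, i, j)
    refine card_subtype_eq_two
      (x := AdmChain.mk' f hf0 ![⊥, ⊥, ⊥, ⊤] ![⊥, L, ⊤, ⊤]
        (mono4 le_rfl le_rfl bot_le) (mono4 bot_le le_top le_rfl) rfl rfl rfl rfl)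
      (y := AdmChain.mk' f hf0 ![⊥, ⊥, ⊥, ⊤] ![⊥, K, ⊤, ⊤]
        (mono4 le_rfl le_rfl bot_le) (mono4 bot_le le_top le_rfl) rfl rfl rfl rfl)
      ⟨⟨rfl, (len_quot_bot_iff L).mpr hLa⟩, ⟨rfl, (len_quot_top_iff L).mpr hLc⟩,
        ⟨rfl, lenT1⟩⟩
      ⟨⟨rfl, (len_quot_bot_iff K).mpr hKa⟩, ⟨rfl, (len_quot_top_iff K).mpr hKc⟩,
        ⟨rfl, lenT1⟩⟩
      (fun h => hLK (congrArg (fun t => t.B 1) h)) ?_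
    rintro ch ⟨h0, h1, h2⟩
    have hA1 : ch.A 1 = ⊥ := h0.1.trans ch.A_zero
    have hA2 : ch.A 2 = ⊥ := h1.1.trans hA1
    have hB2 : ch.B 2 = ⊤ := h2.1.symm.trans ch.B_last
    have hB0' : ch.B (Fin.castSucc 0) = ⊥ := ch.B_zero
    have hlen0 := h0.2
    rw [hB0'] at hlen0
    have hatom : IsAtom (ch.B 1) := (len_quot_bot_iff _).mp hlen0
    have hB2' : ch.B (Fin.succ 1) = ⊤ := hB2
    have hcoat : IsCoatom (ch.B 1) := (len_quot_top_iff' hB2').mp h1.2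
    rcases hclass (ch.B 1) with hW | hW | hW | hW
    · exact absurd hW hatom.1
    · left
      refine AdmChain.ext' (funext fun k => ?_) (funext fun k => ?_) <;> fin_cases k
      · exact ch.A_zero
      · exact hA1
      · exact hA2
      · exact ch.A_last
      · exact ch.B_zero
      · exact hW
      · exact hB2
      · exact ch.B_last
    · right
      refine AdmChain.ext' (funext fun k => ?_) (funext fun k => ?_) <;> fin_cases k
      · exact ch.A_zero
      · exact hA1
      · exact hA2
      · exact ch.A_last
      · exact ch.B_zero
      · exact hW
      · exact hB2
      · exact ch.B_last
    · exact absurd hW hcoat.1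
  · -- pattern (i, j, i)
    refine card_subtype_eq_two
      (x := AdmChain.mk' f hf0 ![⊥, ⊥, ⊤, ⊤] ![⊥, L, L, ⊤]
        (mono4 le_rfl bot_le le_rfl) (mono4 bot_le le_rfl le_top) rfl rfl rfl rfl)
      (y := AdmChain.mk' f hf0 ![⊥, ⊥, ⊤, ⊤] ![⊥, K, K, ⊤]
        (mono4 le_rfl bot_le le_rfl) (mono4 bot_le le_rfl le_top) rfl rfl rfl rfl)
      ⟨⟨rfl, (len_quot_bot_iff L).mpr hLa⟩, ⟨rfl, lenT1⟩,
        ⟨rfl, (len_quot_top_iff L).mpr hLc⟩⟩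
      ⟨⟨rfl, (len_quot_bot_iff K).mpr hKa⟩, ⟨rfl, lenT1⟩,
        ⟨rfl, (len_quot_top_iff K).mpr hKc⟩⟩
      (fun h => hLK (congrArg (fun t => t.B 1) h)) ?_
    rintro ch ⟨h0, h1, h2⟩
    have hA1 : ch.A 1 = ⊥ := h0.1.trans ch.A_zero
    have hB0' : ch.B (Fin.castSucc 0) = ⊥ := ch.B_zero
    have hlen0 := h0.2
    rw [hB0'] at hlen0
    have hatom : IsAtom (ch.B 1) := (len_quot_bot_iff _).mp hlen0
    have hB21 : ch.B 2 = ch.B 1 := h1.1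
    have hA1' : ch.A (Fin.castSucc 1) = ⊥ := hA1
    have hlenA := h1.2
    rw [hA1'] at hlenA
    have hatomA : IsAtom (ch.A 2) := (len_quot_bot_iff _).mp hlenA
    have hA2 : ch.A 2 = ⊤ := by
      rcases eq_bot_or_eq_top (ch.A 2) with hb | ht
      · exact absurd hb hatomA.1
      · exact ht
    have hB3' : ch.B (Fin.succ 2) = ⊤ := ch.B_last
    have hcoB2 : IsCoatom (ch.B 2) := (len_quot_top_iff' hB3').mp h2.2
    rw [hB21] at hcoB2
    rcases hclass (ch.B 1) with hW | hW | hW | hW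
    · exact absurd hW hatom.1
    · left
      refine AdmChain.ext' (funext fun k => ?_) (funext fun k => ?_) <;> fin_cases k
      · exact ch.A_zero
      · exact hA1
      · exact hA2
      · exact ch.A_last
      · exact ch.B_zero
      · exact hW
      · exact hB21.trans hW
      · exact ch.B_last
    · right
      refine AdmChain.ext' (funext fun k => ?_) (funext fun k => ?_) <;> fin_cases k
      · exact ch.A_zero
      · exact hA1
      · exact hA2
      · exact ch.A_last
      · exact ch.B_zero
      · exact hW
      · exact hB21.trans hW
      · exact ch.B_last
    · exact absurd hW hcoB2.1
  · -- pattern (j, i, i)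
    refine card_subtype_eq_two
      (x := AdmChain.mk' f hf0 ![⊥, ⊤, ⊤, ⊤] ![⊥, ⊥, L, ⊤]
        (mono4 bot_le le_rfl le_rfl) (mono4 le_rfl bot_le le_top) rfl rfl rfl rfl)
      (y := AdmChain.mk' f hf0 ![⊥, ⊤, ⊤, ⊤] ![⊥, ⊥, K, ⊤]
        (mono4 bot_le le_rfl le_rfl) (mono4 le_rfl bot_le le_top) rfl rfl rfl rfl)
      ⟨⟨rfl, lenT1⟩, ⟨rfl, (len_quot_bot_iff L).mpr hLa⟩,
        ⟨rfl, (len_quot_top_iff L).mpr hLc⟩⟩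
      ⟨⟨rfl, lenT1⟩, ⟨rfl, (len_quot_bot_iff K).mpr hKa⟩,
        ⟨rfl, (len_quot_top_iff K).mpr hKc⟩⟩
      (fun h => hLK (congrArg (fun t => t.B 2) h)) ?_
    rintro ch ⟨h0, h1, h2⟩
    have hB1 : ch.B 1 = ⊥ := h0.1.trans ch.B_zero
    have hA0' : ch.A (Fin.castSucc 0) = ⊥ := ch.A_zero
    have hlenA := h0.2
    rw [hA0'] at hlenA
    have hatomA : IsAtom (ch.A 1) := (len_quot_bot_iff _).mp hlenA
    have hA1 : ch.A 1 = ⊤ := by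
      rcases eq_bot_or_eq_top (ch.A 1) with hb | ht
      · exact absurd hb hatomA.1
      · exact ht
    have hA2 : ch.A 2 = ⊤ := h1.1.trans hA1
    have hB1' : ch.B (Fin.castSucc 1) = ⊥ := hB1
    have hlen1 := h1.2
    rw [hB1'] at hlen1
    have hatomB : IsAtom (ch.B 2) := (len_quot_bot_iff _).mp hlen1
    have hB3' : ch.B (Fin.succ 2) = ⊤ := ch.B_last
    have hcoB2 : IsCoatom (ch.B 2) := (len_quot_top_iff' hB3').mp h2.2
    rcases hclass (ch.B 2) with hW | hW | hW | hW
    · exact absurd hW hatomB.1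
    · left
      refine AdmChain.ext' (funext fun k => ?_) (funext fun k => ?_) <;> fin_cases k
      · exact ch.A_zero
      · exact hA1
      · exact hA2
      · exact ch.A_last
      · exact ch.B_zero
      · exact hB1
      · exact hW
      · exact ch.B_last
    · right
      refine AdmChain.ext' (funext fun k => ?_) (funext fun k => ?_) <;> fin_cases k
      · exact ch.A_zero
      · exact hA1
      · exact hA2
      · exact ch.A_last
      · exact ch.B_zero
      · exact hB1
      · exact hW
      · exact ch.B_last
    · exact absurd hW hcoB2.1
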